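/- Let N ∈ ℕ, f : ℝ → ℂ measurable, c ∈ ℂ, and s : Fin N → ℂ. Assume that for all k, j ∈ {1,…,N} the function x ↦ x^{k−1} · f(x) · exp(c·x·s_j) is Bochner integrable on ℝ, and that the function x ↦ (∏_i f(x_i) · exp(c·x_i·s_i)) · ∏_{k<l}(x_l − x_k) is Bochner integrable on ℝ^N. Define φ_k(z) = ∫_ℝ x^{k−1} · f(x) · exp(c·x·z) dx for z among the s_j. Then ∫_{ℝ^N} (∏_i f(x_i)·exp(c·x_i·s_i)) · ∏_{k<l}(x_l − x_k) dx = det_{1≤i,j≤N}( φ_i(s_j) ). -/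

import Mathlib

noncomputable section

open Finset MeasureTheory

lemma prod_pairs_aux {M : Type*} [CommMonoid M] {n : ℕ} (g : Fin n → Fin n → M) :
    ∏ q ∈ Finset.univ.filter (fun q : Fin n × Fin n => q.1 < q.2), g q.1 q.2
      = ∏ i, ∏ j ∈ Finset.Ioi i, g i j := by
  rw [Finset.prod_sigma']
  refine Finset.prod_nbij' (fun q => ⟨q.1, q.2⟩) (fun p => (p.1, p.2)) ?_ ?_ ?_ ?_ ?_
  · intro q hq; simp at hq ⊢; exact hq
  · intro p hp; simp at hp ⊢; exact hp
  · intro q hq; rfl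
  · intro p hp; rfl
  · intro q hq; rfl

/-- **The multi-dimensional integral as a determinant of moment integrals.**
With `φ_k(z) = ∫_ℝ x^{k−1} f(x) exp(c x z) dx`, under the stated integrability
hypotheses,
`∫_{ℝ^N} (∏_i f(x_i) exp(c x_i s_i)) ∏_{k<l}(x_l − x_k) dx = det(φ_i(s_j))`. -/
theorem integral_eq_det_moments (N : ℕ) (f : ℝ → ℂ) (hf : Measurable f)
    (c : ℂ) (s : Fin N → ℂ)
    (φ : Fin N → ℂ → ℂ)
    (hφ : ∀ (k : Fin N) (z : ℂ),
      φ k z = ∫ x : ℝ, ((x : ℂ)) ^ (k : ℕ) * f x * Complex.exp (c * (x : ℂ) * z))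
    (hint1 : ∀ k j : Fin N,
      Integrable (fun x : ℝ =>
        ((x : ℂ)) ^ (k : ℕ) * f x * Complex.exp (c * (x : ℂ) * s j)) volume)
    (hint2 : Integrable (fun x : Fin N → ℝ =>
      (∏ i, f (x i) * Complex.exp (c * ((x i : ℝ) : ℂ) * s i)) *
        ((∏ q ∈ Finset.univ.filter (fun q : Fin N × Fin N => q.1 < q.2),
            (x q.2 - x q.1) : ℝ) : ℂ)) volume) :
    ∫ x : Fin N → ℝ,
        (∏ i, f (x i) * Complex.exp (c * ((x i : ℝ) : ℂ) * s i)) *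
          ((∏ q ∈ Finset.univ.filter (fun q : Fin N × Fin N => q.1 < q.2),
              (x q.2 - x q.1) : ℝ) : ℂ) =
      Matrix.det (Matrix.of fun i j : Fin N => φ i (s j)) := by
  classical
  -- the integrand as a sum over permutations of products of single-variable functions
  have key : ∀ x : Fin N → ℝ,
      (∏ i, f (x i) * Complex.exp (c * ((x i : ℝ) : ℂ) * s i)) *
        ((∏ q ∈ Finset.univ.filter (fun q : Fin N × Fin N => q.1 < q.2),
            (x q.2 - x q.1) : ℝ) : ℂ)
      = ∑ σ : Equiv.Perm (Fin N), ((Equiv.Perm.sign σ : ℤ) : ℂ) *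
          ∏ i, (((x i : ℝ) : ℂ) ^ ((σ⁻¹ i : Fin N) : ℕ) * f (x i) *
            Complex.exp (c * ((x i : ℝ) : ℂ) * s i)) := by
    intro x
    have h1 : ((∏ q ∈ Finset.univ.filter (fun q : Fin N × Fin N => q.1 < q.2),
          (x q.2 - x q.1) : ℝ) : ℂ)
        = Matrix.det (Matrix.vandermonde (fun i => ((x i : ℝ) : ℂ))) := by
      rw [Matrix.det_vandermonde]
      push_cast
      exact prod_pairs_aux (fun i j => ((x j : ℝ) : ℂ) - ((x i : ℝ) : ℂ))
    rw [h1, Matrix.det_apply', Finset.mul_sum]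
    refine Finset.sum_congr rfl fun σ _ => ?_
    have h2 : ∏ i, ((x (σ i) : ℝ) : ℂ) ^ (i : ℕ)
        = ∏ i, ((x i : ℝ) : ℂ) ^ ((σ⁻¹ i : Fin N) : ℕ) := by
      have := Equiv.prod_comp σ (fun j => ((x j : ℝ) : ℂ) ^ ((σ⁻¹ j : Fin N) : ℕ))
      simp only [← Equiv.Perm.mul_apply, inv_mul_cancel, Equiv.Perm.one_apply] at this
      exact this
    simp only [Matrix.vandermonde_apply]
    rw [h2, mul_left_comm]
    congr 1
    rw [← Finset.prod_mul_distrib]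
    exact Finset.prod_congr rfl fun i _ => by ring
  simp_rw [key]
  rw [integral_finset_sum _ (fun σ _ => ?_)]
  · -- compute each term
    have hterm : ∀ σ : Equiv.Perm (Fin N),
        ∫ x : Fin N → ℝ, ((Equiv.Perm.sign σ : ℤ) : ℂ) *
          ∏ i, (((x i : ℝ) : ℂ) ^ ((σ⁻¹ i : Fin N) : ℕ) * f (x i) *
            Complex.exp (c * ((x i : ℝ) : ℂ) * s i))
        = ((Equiv.Perm.sign σ : ℤ) : ℂ) * ∏ i, φ (σ⁻¹ i) (s i) := by
      intro σ
      rw [integral_const_mul]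
      congr 1
      rw [volume_pi, integral_fintype_prod_eq_prod (ι := Fin N)
        (f := fun i (t : ℝ) => ((t : ℝ) : ℂ) ^ ((σ⁻¹ i : Fin N) : ℕ) * f t *
          Complex.exp (c * (t : ℂ) * s i))]
      exact Finset.prod_congr rfl fun i _ => (hφ (σ⁻¹ i) (s i)).symm
    simp_rw [hterm]
    rw [Matrix.det_apply']
    rw [← Equiv.sum_comp (Equiv.inv (Equiv.Perm (Fin N)))]
    refine Finset.sum_congr rfl fun σ _ => ?_
    simp [Equiv.Perm.sign_inv]
  · exact (Integrable.fintype_prod (f := fun i (t : ℝ) =>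
      ((t : ℝ) : ℂ) ^ ((σ⁻¹ i : Fin N) : ℕ) * f t * Complex.exp (c * (t : ℂ) * s i))
      (fun i => hint1 (σ⁻¹ i) i)).const_mul _
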